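/- arXiv:2106.06893 — 2 statements merged into one kernel-verified Lean document; each statement's English description precedes it below -/
import Mathlib

section
/- Let v₀, v₁, …, v_k (k ≥ 2) be points in ℝⁿ with consecutive points distinct, forming a polygonal path, and let tc denote the sum of exterior angles at interior vertices, i.e., tc = Σ_{i=1}^{k−1} angle(v_i − v_{i−1}, v_{i+1} − v_i). If the path is extended on both sides by segments from a to v₀ and from v_k to b (with a ≠ v₀, v_k ≠ b), then replacing the entire sub-path v₀,…,v_k by the single segment from v₀ to v_k does not increase the total turning: angle(v₀ − a, v_k − v₀) + angle(v_k − v₀, b − v_k) ≤ angle(v₀ − a, v₁ − v₀) + tc + angle(v_k − v_{k−1}, b − v_k). -/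
open InnerProductGeometry

open InnerProductGeometry Real
open scoped RealInnerProductSpace

variable {V : Type*} [NormedAddCommGroup V] [InnerProductSpace ℝ V]

private lemma norm_proj_perp {x y : V} (hx : ‖x‖ = 1) (hy : ‖y‖ = 1) :
    ‖x - ⟪x, y⟫ • y‖ = Real.sin (angle x y) := by
  have hc : Real.cos (angle x y) = ⟪x, y⟫ := by
    rw [cos_angle, hx, hy]; simp
  have hs : 0 ≤ Real.sin (angle x y) :=
    Real.sin_nonneg_of_nonneg_of_le_pi (angle_nonneg _ _) (angle_le_pi _ _)
  have hsq : ‖x - ⟪x, y⟫ • y‖ ^ 2 = Real.sin (angle x y) ^ 2 := by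
    have h1 : ‖x - ⟪x, y⟫ • y‖ ^ 2 = ⟪x - ⟪x, y⟫ • y, x - ⟪x, y⟫ • y⟫ :=
      (real_inner_self_eq_norm_sq _).symm
    have hx2 : ⟪x, x⟫ = 1 := by rw [real_inner_self_eq_norm_sq, hx]; norm_num
    have hy2 : ⟪y, y⟫ = 1 := by rw [real_inner_self_eq_norm_sq, hy]; norm_num
    have hxy : ⟪y, x⟫ = ⟪x, y⟫ := real_inner_comm _ _
    rw [h1]
    simp only [inner_sub_left, inner_sub_right, real_inner_smul_left, real_inner_smul_right,
      hx2, hy2, hxy]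
    rw [Real.sin_sq, hc]
    ring
  calc ‖x - ⟪x, y⟫ • y‖ = √(‖x - ⟪x, y⟫ • y‖ ^ 2) := (Real.sqrt_sq (norm_nonneg _)).symm
    _ = √(Real.sin (angle x y) ^ 2) := by rw [hsq]
    _ = Real.sin (angle x y) := Real.sqrt_sq hs

private lemma angle_triangle_unit {x y z : V} (hx : ‖x‖ = 1) (hy : ‖y‖ = 1) (hz : ‖z‖ = 1) :
    angle x z ≤ angle x y + angle y z := by
  by_cases hab : angle x y + angle y z ≤ π
  · have hc1 : Real.cos (angle x y) = ⟪x, y⟫ := by rw [cos_angle, hx, hy]; simp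
    have hc2 : Real.cos (angle y z) = ⟪y, z⟫ := by rw [cos_angle, hy, hz]; simp
    have h1 := norm_proj_perp hx hy
    have h2 := norm_proj_perp hz hy
    have hCS := abs_real_inner_le_norm (x - ⟪x, y⟫ • y) (z - ⟪z, y⟫ • y)
    rw [h1, h2, angle_comm z y] at hCS
    have hy2 : ⟪y, y⟫ = 1 := by rw [real_inner_self_eq_norm_sq, hy]; norm_num
    have hinner : ⟪x - ⟪x, y⟫ • y, z - ⟪z, y⟫ • y⟫
        = ⟪x, z⟫ - ⟪x, y⟫ * ⟪y, z⟫ := by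
      simp only [inner_sub_left, inner_sub_right, real_inner_smul_left, real_inner_smul_right, hy2]
      rw [real_inner_comm z y]
      ring
    have key : Real.cos (angle x y + angle y z) ≤ ⟪x, z⟫ := by
      rw [Real.cos_add, hc1, hc2]
      have := abs_le.mp hCS
      nlinarith [hinner, this.1]
    have hxz : angle x z = Real.arccos ⟪x, z⟫ := by
      rw [angle, hx, hz]; simp
    calc angle x z = Real.arccos ⟪x, z⟫ := hxz
      _ ≤ Real.arccos (Real.cos (angle x y + angle y z)) := by
          simp only [Real.arccos]
          have := Real.monotone_arcsin key
          linarith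
      _ = angle x y + angle y z := Real.arccos_cos
          (add_nonneg (angle_nonneg _ _) (angle_nonneg _ _)) hab
  · linarith [angle_le_pi x z]

lemma angle_triangle' (x y z : V) : angle x z ≤ angle x y + angle y z := by
  rcases eq_or_ne x 0 with rfl | hx
  · rw [angle_zero_left, angle_zero_left]
    linarith [angle_nonneg y z]
  rcases eq_or_ne z 0 with rfl | hz
  · rw [angle_zero_right, angle_zero_right]
    linarith [angle_nonneg x y]
  rcases eq_or_ne y 0 with rfl | hy
  · rw [angle_zero_right, angle_zero_left]
    linarith [angle_le_pi x z, Real.pi_pos]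
  have hx' : (0:ℝ) < ‖x‖⁻¹ := inv_pos.mpr (norm_pos_iff.mpr hx)
  have hy' : (0:ℝ) < ‖y‖⁻¹ := inv_pos.mpr (norm_pos_iff.mpr hy)
  have hz' : (0:ℝ) < ‖z‖⁻¹ := inv_pos.mpr (norm_pos_iff.mpr hz)
  have hnorm : ∀ w : V, w ≠ 0 → ‖‖w‖⁻¹ • w‖ = 1 := fun w hw => by
    rw [norm_smul, norm_inv, norm_norm, inv_mul_cancel₀ (norm_ne_zero_iff.mpr hw)]
  have := angle_triangle_unit (hnorm x hx) (hnorm y hy) (hnorm z hz)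
  rwa [angle_smul_left_of_pos _ _ hx', angle_smul_left_of_pos _ _ hx',
    angle_smul_right_of_pos _ _ hz', angle_smul_right_of_pos _ _ hy',
    angle_smul_left_of_pos _ _ hy', angle_smul_right_of_pos _ _ hz'] at this

lemma angle_cone {x y : V} (hx : x ≠ 0) (hy : y ≠ 0) :
    angle x (x + y) + angle (x + y) y = angle x y := by
  have h := angle_add_angle_sub_add_angle_sub_eq_pi x (neg_ne_zero.mpr hy)
  rw [sub_neg_eq_add] at h
  have e1 : angle x (-y) = π - angle x y := angle_neg_right x y
  have e2 : -y - x = -(x + y) := by abel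
  rw [e1, e2, angle_neg_neg, angle_comm y (x + y)] at h
  linarith

lemma segment_lemma (u z : V) {w1 : V} (hw1 : w1 ≠ 0) (w2 : V) :
    angle u (w1 + w2) + angle (w1 + w2) z ≤ angle u w1 + angle w1 w2 + angle w2 z := by
  rcases eq_or_ne w2 0 with rfl | hw2
  · rw [add_zero, angle_zero_right, angle_zero_left]
    linarith [angle_le_pi w1 z, Real.pi_pos]
  have hc := angle_cone hw1 hw2
  have t1 := angle_triangle' u w1 (w1 + w2)
  have t2 := angle_triangle' (w1 + w2) w2 z
  linarith

lemma milnor (k : ℕ) (hk : 1 ≤ k) (v : ℕ → V) (a b : V)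
    (hcons : ∀ i < k, v i ≠ v (i + 1)) (ha : a ≠ v 0) (hb : v k ≠ b) :
    angle (v 0 - a) (v k - v 0) + angle (v k - v 0) (b - v k) ≤
      angle (v 0 - a) (v 1 - v 0)
        + (∑ i ∈ Finset.Ico 1 k, angle (v i - v (i - 1)) (v (i + 1) - v i))
        + angle (v k - v (k - 1)) (b - v k) := by
  induction k, hk using Nat.le_induction generalizing v a b with
  | base => simp
  | succ k hk IH =>
    have hw1 : v 1 - v 0 ≠ 0 := sub_ne_zero.mpr (hcons 0 (by omega)).symm
    have h1 : angle (v 0 - a) (v (k+1) - v 0) + angle (v (k+1) - v 0) (b - v (k+1)) ≤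
        angle (v 0 - a) (v 1 - v 0) + angle (v 1 - v 0) (v (k+1) - v 1)
          + angle (v (k+1) - v 1) (b - v (k+1)) := by
      have := segment_lemma (v 0 - a) (b - v (k+1)) hw1 (v (k+1) - v 1)
      rwa [show v 1 - v 0 + (v (k+1) - v 1) = v (k+1) - v 0 by abel] at this
    have h2 := IH (fun i => v (i + 1)) (v 0) b
      (fun i hi => hcons (i + 1) (by omega)) (hcons 0 (by omega)) hb
    -- reindex the sum in h2
    have hsum : (∑ i ∈ Finset.Ico 1 k,
          angle (v (i + 1) - v (i - 1 + 1)) (v (i + 1 + 1) - v (i + 1)))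
        = ∑ i ∈ Finset.Ico 2 (k+1), angle (v i - v (i - 1)) (v (i + 1) - v i) := by
      rw [show (2:ℕ) = 1 + 1 by norm_num]
      rw [← Finset.sum_Ico_add' (fun i => angle (v i - v (i - 1)) (v (i + 1) - v i)) 1 k 1]
      apply Finset.sum_congr rfl
      intro i hi
      have h1i : 1 ≤ i := (Finset.mem_Ico.mp hi).1
      rw [show i - 1 + 1 = i from by omega, Nat.add_sub_cancel]
    rw [hsum] at h2
    have hsplit : (∑ i ∈ Finset.Ico 1 (k+1), angle (v i - v (i - 1)) (v (i + 1) - v i))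
        = angle (v 1 - v 0) (v 2 - v 1)
          + ∑ i ∈ Finset.Ico 2 (k+1), angle (v i - v (i - 1)) (v (i + 1) - v i) := by
      rw [Finset.sum_eq_sum_Ico_succ_bot (by omega : 1 < k + 1)]
    have hk1 : k - 1 + 1 = k := by omega
    rw [hk1] at h2
    rw [hsplit]
    have hlast : (k + 1 : ℕ) - 1 = k := by omega
    rw [hlast]
    linarith


/-- Milnor's chord lemma: replacing a polygonal sub-path `v₀, …, v_k` (with
consecutive points distinct), extended by segments from `a` to `v₀` and from `v_k`
to `b`, by the single chord from `v₀` to `v_k` does not increase the total turning. -/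
theorem stmt_10 (n k : ℕ) (hk : 2 ≤ k) (v : ℕ → EuclideanSpace ℝ (Fin n))
    (a b : EuclideanSpace ℝ (Fin n))
    (hcons : ∀ i < k, v i ≠ v (i + 1)) (ha : a ≠ v 0) (hb : v k ≠ b) :
    angle (v 0 - a) (v k - v 0) + angle (v k - v 0) (b - v k) ≤
      angle (v 0 - a) (v 1 - v 0)
        + (∑ i ∈ Finset.Ico 1 k, angle (v i - v (i - 1)) (v (i + 1) - v i))
        + angle (v k - v (k - 1)) (b - v k) := by
  exact milnor k (by omega) v a b hcons ha hb
end

section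
/- Let Γ be a compact subset of ℝⁿ and for v ∈ ℝⁿ \ Γ let C_{Γ,v} = {v + s(x − v) : x ∈ Γ, s ≥ 0} be the cone over Γ with vertex v. Then the map v ↦ C_{Γ,v} is continuous on ℝⁿ \ Γ in the sense of Hausdorff distance on compact subsets: if v_i → v in ℝⁿ \ Γ, then C_{Γ,v_i} ∩ B(0,R) converges to C_{Γ,v} ∩ B(0,R) in Hausdorff distance for every R > 0 with Γ ⊆ B(0,R). -/
open Metric Filter

private lemma norm_combo_sq {E : Type*} [NormedAddCommGroup E] [InnerProductSpace ℝ E]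
    (a b : E) (t : ℝ) :
    ‖(1 - t) • a + t • b‖ ^ 2 =
      (1 - t) * ‖a‖ ^ 2 + t * ‖b‖ ^ 2 - t * (1 - t) * ‖a - b‖ ^ 2 := by
  rw [← real_inner_self_eq_norm_sq, ← real_inner_self_eq_norm_sq a,
    ← real_inner_self_eq_norm_sq b, ← real_inner_self_eq_norm_sq (a - b)]
  simp only [inner_add_left, inner_add_right, inner_sub_left, inner_sub_right,
    real_inner_smul_left, real_inner_smul_right, real_inner_comm b a]
  ring

set_option maxHeartbeats 1000000 in
private lemma cone_approx {E : Type*} [NormedAddCommGroup E] [InnerProductSpace ℝ E]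
    (Γ : Set E) (R : ℝ) (hR : 0 < R) (hΓR : Γ ⊆ closedBall 0 R)
    (u u' : E) (δ M : ℝ) (hδ : 0 < δ) (hM : 0 ≤ M)
    (hdist : ∀ x ∈ Γ, δ ≤ dist u x) (hMu : R + ‖u‖ ≤ M * δ)
    (y : E) (hy : y ∈ {y | ∃ x ∈ Γ, ∃ s : ℝ, 0 ≤ s ∧ y = u + s • (x - u)} ∩ closedBall 0 R) :
    ∃ z ∈ {y | ∃ x ∈ Γ, ∃ s : ℝ, 0 ≤ s ∧ y = u' + s • (x - u')} ∩ closedBall 0 R,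
      dist y z ≤ (1 + M) * dist u u' +
        Real.sqrt (2 * R * ((1 + M) * dist u u') + ((1 + M) * dist u u') ^ 2) := by
  obtain ⟨⟨x, hx, s, hs, rfl⟩, hyB⟩ := hy
  set η : ℝ := (1 + M) * dist u u' with hηdef
  have hd0 : (0:ℝ) ≤ dist u u' := dist_nonneg
  have hη0 : 0 ≤ η := by positivity
  have hA0 : 0 ≤ 2 * R * η + η ^ 2 := by positivity
  have hsqrt0 : 0 ≤ Real.sqrt (2 * R * η + η ^ 2) := Real.sqrt_nonneg _
  -- bound on s
  have hxu : δ ≤ ‖x - u‖ := by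
    have := hdist x hx
    rwa [dist_comm, dist_eq_norm] at this
  have hynorm : ‖u + s • (x - u)‖ ≤ R := by
    simpa [mem_closedBall, dist_zero_right] using hyB
  have hsn : s * ‖x - u‖ ≤ R + ‖u‖ := by
    have h1 : ‖s • (x - u)‖ ≤ ‖u + s • (x - u)‖ + ‖u‖ := by
      have := norm_sub_le (u + s • (x - u)) u
      simpa using this
    rw [norm_smul, Real.norm_eq_abs, abs_of_nonneg hs] at h1
    linarith
  have hsM : s ≤ M := by
    have h2 : s * δ ≤ s * ‖x - u‖ := by nlinarith
    have h3 : s * δ ≤ M * δ := by linarith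
    exact le_of_mul_le_mul_right (by linarith) hδ
  -- the shifted point
  set y' : E := u' + s • (x - u') with hy'def
  have hyy' : dist (u + s • (x - u)) y' ≤ η := by
    have hvec : (u + s • (x - u)) - (u' + s • (x - u')) = (1 - s) • (u - u') := by
      module
    rw [hy'def, dist_eq_norm, hvec, norm_smul, Real.norm_eq_abs]
    have habs : |1 - s| ≤ 1 + M := by
      rw [abs_le]; constructor <;> nlinarith
    have : ‖u - u'‖ = dist u u' := (dist_eq_norm u u').symm
    rw [this, hηdef]
    exact mul_le_mul_of_nonneg_right habs hd0
  have hy'norm : ‖y'‖ ≤ R + η := by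
    have h := norm_le_insert' y' (u + s • (x - u))
    have h2 : ‖y' - (u + s • (x - u))‖ = dist (u + s • (x - u)) y' := by
      rw [dist_comm, dist_eq_norm]
    rw [h2] at h
    linarith
  have hy'cone : y' ∈ {y | ∃ x ∈ Γ, ∃ s : ℝ, 0 ≤ s ∧ y = u' + s • (x - u')} :=
    ⟨x, hx, s, hs, rfl⟩
  by_cases hcase : ‖y'‖ ≤ R
  · refine ⟨y', ⟨hy'cone, by simpa [mem_closedBall, dist_zero_right] using hcase⟩, ?_⟩
    exact le_trans hyy' (by linarith)
  · push_neg at hcase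
    have hxR : ‖x‖ ≤ R := by simpa [mem_closedBall, dist_zero_right] using hΓR hx
    have hxy' : (0:ℝ) < ‖x - y'‖ := by
      have : x ≠ y' := by
        intro h; rw [h] at hxR; linarith
      simpa [norm_pos_iff, sub_eq_zero] using sub_ne_zero_of_ne this
    set D : ℝ := ‖x - y'‖ with hDdef
    by_cases hD : D ^ 2 ≤ 2 * R * η + η ^ 2
    · -- use x itself
      refine ⟨x, ⟨⟨x, hx, 1, zero_le_one, by simp⟩, hΓR hx⟩, ?_⟩
      have hDle : D ≤ Real.sqrt (2 * R * η + η ^ 2) := by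
        have := Real.sqrt_le_sqrt hD
        rwa [Real.sqrt_sq hxy'.le] at this
      calc dist (u + s • (x - u)) x
          ≤ dist (u + s • (x - u)) y' + dist y' x := dist_triangle _ _ _
        _ ≤ η + D := by
            refine add_le_add hyy' ?_
            rw [dist_eq_norm, hDdef, ← norm_neg (x - y')]
            simp
        _ ≤ η + Real.sqrt (2 * R * η + η ^ 2) := by linarith
    · push_neg at hD
      set t : ℝ := (2 * R * η + η ^ 2) / D ^ 2 with htdef
      have ht0 : 0 ≤ t := by positivity
      have ht1 : t ≤ 1 := by
        rw [htdef, div_le_one (by positivity)]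
        exact hD.le
      have hDne : D ≠ 0 := ne_of_gt hxy'
      have htD : t * D ^ 2 = 2 * R * η + η ^ 2 := by
        rw [htdef]; exact div_mul_cancel₀ _ (pow_ne_zero 2 hDne)
      set z : E := (1 - t) • y' + t • x with hzdef
      -- z is in the cone over u'
      have hzcone : z ∈ {y | ∃ x ∈ Γ, ∃ s : ℝ, 0 ≤ s ∧ y = u' + s • (x - u')} := by
        refine ⟨x, hx, s + t * (1 - s), by nlinarith, ?_⟩
        rw [hzdef, hy'def]; module
      -- z is in the ball
      have hznorm2 : ‖z‖ ^ 2 ≤ R ^ 2 := by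
        have hid := norm_combo_sq y' x t
        have h1 : ‖y'‖ ^ 2 ≤ (R + η) ^ 2 := by nlinarith [norm_nonneg y']
        have h2 : ‖x‖ ^ 2 ≤ R ^ 2 := by nlinarith [norm_nonneg x]
        have h3 : ‖y' - x‖ = D := by rw [hDdef, ← norm_neg (x - y')]; simp
        rw [hzdef, hid, h3]
        nlinarith
      have hznorm : ‖z‖ ≤ R := by nlinarith [norm_nonneg z]
      have hy'z : dist y' z ≤ Real.sqrt (2 * R * η + η ^ 2) := by
        have hvec : y' - z = t • (y' - x) := by rw [hzdef]; module
        have h3 : ‖y' - x‖ = D := by rw [hDdef, ← norm_neg (x - y')]; simp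
        rw [dist_eq_norm, hvec, norm_smul, Real.norm_eq_abs, abs_of_nonneg ht0, h3]
        rcases eq_or_lt_of_le hA0 with hAz | hApos
        · have : t = 0 := by rw [htdef, ← hAz]; simp
          rw [this]; simpa using hsqrt0
        · have hsq : Real.sqrt (2 * R * η + η ^ 2) ≤ D := by
            have := Real.sqrt_le_sqrt hD.le
            rwa [Real.sqrt_sq hxy'.le] at this
          have hsqpos : 0 < Real.sqrt (2 * R * η + η ^ 2) := Real.sqrt_pos.2 hApos
          have hDeq : t * D = (2 * R * η + η ^ 2) / D := by
            rw [eq_div_iff hDne, mul_assoc, ← pow_two]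
            exact htD
          rw [hDeq, div_le_iff₀ hxy']
          calc 2 * R * η + η ^ 2
              = Real.sqrt (2 * R * η + η ^ 2) * Real.sqrt (2 * R * η + η ^ 2) :=
                (Real.mul_self_sqrt hA0).symm
            _ ≤ Real.sqrt (2 * R * η + η ^ 2) * D := by
                exact mul_le_mul_of_nonneg_left hsq hsqrt0
      refine ⟨z, ⟨hzcone, by simpa [mem_closedBall, dist_zero_right] using hznorm⟩, ?_⟩
      calc dist (u + s • (x - u)) z
          ≤ dist (u + s • (x - u)) y' + dist y' z := dist_triangle _ _ _
        _ ≤ η + Real.sqrt (2 * R * η + η ^ 2) := add_le_add hyy' hy'z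

/-- Continuity of the cone construction away from a compact set `Γ ⊆ ℝⁿ`: if
`v i → w` with all `v i` and `w` outside `Γ`, then for every `R > 0` with
`Γ ⊆ B(0,R)`, the truncated cones `C_{Γ, v i} ∩ B(0,R)` converge to
`C_{Γ, w} ∩ B(0,R)` in Hausdorff distance. -/
theorem stmt_14 (n : ℕ) (Γ : Set (EuclideanSpace ℝ (Fin n))) (hΓ : IsCompact Γ)
    (v : ℕ → EuclideanSpace ℝ (Fin n)) (w : EuclideanSpace ℝ (Fin n))
    (hv : ∀ i, v i ∉ Γ) (hw : w ∉ Γ) (hlim : Tendsto v atTop (nhds w))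
    (R : ℝ) (hR : 0 < R) (hΓR : Γ ⊆ closedBall 0 R) :
    Tendsto (fun i => hausdorffDist
        ({y | ∃ x ∈ Γ, ∃ s : ℝ, 0 ≤ s ∧ y = v i + s • (x - v i)} ∩ closedBall 0 R)
        ({y | ∃ x ∈ Γ, ∃ s : ℝ, 0 ≤ s ∧ y = w + s • (x - w)} ∩ closedBall 0 R))
      atTop (nhds 0) := by
  rcases Γ.eq_empty_or_nonempty with rfl | hne
  · have : ∀ i, hausdorffDist
        ({y | ∃ x ∈ (∅ : Set (EuclideanSpace ℝ (Fin n))), ∃ s : ℝ, 0 ≤ s ∧ y = v i + s • (x - v i)} ∩ closedBall 0 R)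
        ({y | ∃ x ∈ (∅ : Set (EuclideanSpace ℝ (Fin n))), ∃ s : ℝ, 0 ≤ s ∧ y = w + s • (x - w)} ∩ closedBall 0 R) = 0 := by
      intro i
      have h1 : {y | ∃ x ∈ (∅ : Set (EuclideanSpace ℝ (Fin n))), ∃ s : ℝ, 0 ≤ s ∧ y = w + s • (x - w)} = ∅ := by
        ext y; simp
      rw [h1, Set.empty_inter, hausdorffDist_empty]
    simpa [this] using tendsto_const_nhds
  · have hδ0 : 0 < infDist w Γ := (hΓ.isClosed.notMem_iff_infDist_pos hne).1 hw
    set δ0 : ℝ := infDist w Γ with hδ0def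
    set δ : ℝ := δ0 / 2 with hδdef
    have hδpos : 0 < δ := by positivity
    set M : ℝ := (R + ‖w‖ + δ0) / δ with hMdef
    have hMpos : 0 < M := by positivity
    have hwdist : ∀ x ∈ Γ, δ ≤ dist w x := fun x hx => by
      have := infDist_le_dist_of_mem (x := w) hx
      rw [← hδ0def] at this; linarith
    have hMw : R + ‖w‖ ≤ M * δ := by
      rw [hMdef, div_mul_cancel₀ _ (ne_of_gt hδpos)]; linarith
    set g : ℕ → ℝ := fun i => (1 + M) * dist (v i) w +
      Real.sqrt (2 * R * ((1 + M) * dist (v i) w) + ((1 + M) * dist (v i) w) ^ 2) with hgdef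
    have hev : ∀ᶠ i in atTop, dist (v i) w ≤ δ := by
      filter_upwards [hlim (Metric.closedBall_mem_nhds w hδpos)] with i hi
      simpa [mem_closedBall] using hi
    have hbound : ∀ᶠ i in atTop, hausdorffDist
        ({y | ∃ x ∈ Γ, ∃ s : ℝ, 0 ≤ s ∧ y = v i + s • (x - v i)} ∩ closedBall 0 R)
        ({y | ∃ x ∈ Γ, ∃ s : ℝ, 0 ≤ s ∧ y = w + s • (x - w)} ∩ closedBall 0 R) ≤ g i := by
      filter_upwards [hev] with i hi
      have hvdist : ∀ x ∈ Γ, δ ≤ dist (v i) x := fun x hx => by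
        have h1 := hwdist x hx
        have h2 := dist_triangle w (v i) x
        have h3 : δ0 ≤ dist w x := by
          have := infDist_le_dist_of_mem (x := w) hx
          rw [← hδ0def] at this; linarith
        have h4 : dist w (v i) = dist (v i) w := dist_comm _ _
        rw [hδdef]; linarith [dist_triangle w (v i) x]
      have hMv : R + ‖v i‖ ≤ M * δ := by
        have h1 : ‖v i‖ ≤ ‖w‖ + dist (v i) w := by
          rw [dist_eq_norm]
          exact norm_le_insert' (v i) w
        have h2 : M * δ = R + ‖w‖ + δ0 := by
          rw [hMdef, div_mul_cancel₀ _ (ne_of_gt hδpos)]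
        have hδle : δ ≤ δ0 := by rw [hδdef]; linarith
        linarith
      have hg0 : 0 ≤ g i := by
        rw [hgdef]
        have : (0:ℝ) ≤ (1 + M) * dist (v i) w := by positivity
        exact add_nonneg this (Real.sqrt_nonneg _)
      refine hausdorffDist_le_of_mem_dist hg0 ?_ ?_
      · intro y hy
        exact cone_approx Γ R hR hΓR (v i) w δ M hδpos hMpos.le hvdist hMv y hy
      · intro y hy
        obtain ⟨z, hz, hdz⟩ :=
          cone_approx Γ R hR hΓR w (v i) δ M hδpos hMpos.le hwdist hMw y hy
        refine ⟨z, hz, ?_⟩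
        rw [dist_comm w (v i)] at hdz
        exact hdz
    have hd : Tendsto (fun i => dist (v i) w) atTop (nhds 0) :=
      tendsto_iff_dist_tendsto_zero.1 hlim
    have h1 : Tendsto (fun i => (1 + M) * dist (v i) w) atTop (nhds 0) := by
      simpa using hd.const_mul (1 + M)
    have h2 : Tendsto (fun i => 2 * R * ((1 + M) * dist (v i) w) +
        ((1 + M) * dist (v i) w) ^ 2) atTop (nhds 0) := by
      have ha := h1.const_mul (2 * R)
      have hb := h1.pow 2
      simpa using ha.add hb
    have h3 : Tendsto (fun i => Real.sqrt (2 * R * ((1 + M) * dist (v i) w) +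
        ((1 + M) * dist (v i) w) ^ 2)) atTop (nhds 0) := by
      have := (Real.continuous_sqrt.tendsto 0).comp h2
      simpa [Function.comp_def] using this
    have hg : Tendsto g atTop (nhds 0) := by
      rw [hgdef]
      simpa using h1.add h3
    exact squeeze_zero' (Eventually.of_forall fun i => hausdorffDist_nonneg) hbound hg
end
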